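/- For every 2×2 Hermitian matrix H, exp(i·H_U) = φ₂(exp(iH)), where H_U = [[2H₁₁, 0, √2 H₁₂], [0, 2H₂₂, √2 H₂₁], [√2 H₂₁, √2 H₁₂, H₁₁ + H₂₂]] and φ₂ is the two-photon map φ₂(S) = [[S₁₁², S₁₂², √2 S₁₁S₁₂], [S₂₁², S₂₂², √2 S₂₁S₂₂], [√2 S₁₁S₂₁, √2 S₁₂S₂₂, S₁₁S₂₂ + S₁₂S₂₁]]. -/

import Mathlib

open Matrix

attribute [local instance] Matrix.linftyOpNormedRing Matrix.linftyOpNormedAlgebra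

noncomputable def rt2 : ℂ := (Real.sqrt 2 : ℝ)

/-- The two-photon map `φ₂` sending a `2 × 2` matrix `S` to the `3 × 3` matrix
acting on the two-photon basis `|20⟩, |02⟩, |11⟩`. -/
noncomputable def phi2 (S : Matrix (Fin 2) (Fin 2) ℂ) : Matrix (Fin 3) (Fin 3) ℂ :=
  !![S 0 0 ^ 2, S 0 1 ^ 2, rt2 * S 0 0 * S 0 1;
     S 1 0 ^ 2, S 1 1 ^ 2, rt2 * S 1 0 * S 1 1;
     rt2 * S 0 0 * S 1 0, rt2 * S 0 1 * S 1 1, S 0 0 * S 1 1 + S 0 1 * S 1 0]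


/-- The two-photon Hamiltonian `H_U` associated to a one-photon Hamiltonian `H`. -/
noncomputable def HU (H : Matrix (Fin 2) (Fin 2) ℂ) : Matrix (Fin 3) (Fin 3) ℂ :=
  !![2 * H 0 0, 0, rt2 * H 0 1;
     0, 2 * H 1 1, rt2 * H 1 0;
     rt2 * H 1 0, rt2 * H 0 1, H 0 0 + H 1 1]

open NormedSpace

attribute [local instance] Matrix.linftyOpNormedAddCommGroup Matrix.linftyOpNormedSpace

noncomputable def mEquiv (m n : Type*) [Fintype m] [Fintype n] :
    Matrix m n ℂ ≃L[ℝ] (m → n → ℂ) :=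
  LinearEquiv.toContinuousLinearEquiv
    (LinearEquiv.refl ℝ (Matrix m n ℂ) : Matrix m n ℂ ≃ₗ[ℝ] (m → n → ℂ))

lemma hasDerivAt_matrix {m n : Type*} [Fintype m] [Fintype n]
    {f : ℝ → Matrix m n ℂ} {f' : Matrix m n ℂ} {t : ℝ} :
    HasDerivAt f f' t ↔ ∀ i j, HasDerivAt (fun s => f s i j) (f' i j) t := by
  rw [hasDerivAt_iff_hasFDerivAt]
  refine (mEquiv m n).comp_hasFDerivAt_iff.symm.trans ?_
  constructor
  · intro h i j
    have h' := h.hasDerivAt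
    have h2 := hasDerivAt_pi.1 (hasDerivAt_pi.1 h' i) j
    convert h2 using 1
    · rfl
    · rfl
    · show f' i j = ((1:ℝ) • f') i j
      rw [one_smul]
  · intro h
    have : HasDerivAt (fun s => (mEquiv m n) (f s)) (f' : m → n → ℂ) t :=
      hasDerivAt_pi.2 fun i => hasDerivAt_pi.2 fun j => h i j
    exact this.hasFDerivAt

lemma rt2_sq : rt2 * rt2 = 2 := by
  rw [rt2, ← Complex.ofReal_mul, Real.mul_self_sqrt (by norm_num : (0:ℝ) ≤ 2)]
  norm_num

noncomputable def dphi (S T : Matrix (Fin 2) (Fin 2) ℂ) : Matrix (Fin 3) (Fin 3) ℂ :=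
  !![2 * S 0 0 * T 0 0, 2 * S 0 1 * T 0 1, rt2 * (T 0 0 * S 0 1 + S 0 0 * T 0 1);
     2 * S 1 0 * T 1 0, 2 * S 1 1 * T 1 1, rt2 * (T 1 0 * S 1 1 + S 1 0 * T 1 1);
     rt2 * (T 0 0 * S 1 0 + S 0 0 * T 1 0), rt2 * (T 0 1 * S 1 1 + S 0 1 * T 1 1),
       T 0 0 * S 1 1 + S 0 0 * T 1 1 + T 0 1 * S 1 0 + S 0 1 * T 1 0]

lemma key (X S : Matrix (Fin 2) (Fin 2) ℂ) : HU X * phi2 S = dphi S (X * S) := by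
  have h2 : rt2 ^ 2 = 2 := by rw [sq, rt2_sq]
  ext i j
  fin_cases i <;> fin_cases j <;>
    simp [HU, phi2, dphi, Matrix.mul_apply, Fin.sum_univ_succ] <;>
    ring_nf <;> simp [h2] <;> ring

lemma phi2_one : phi2 1 = 1 := by
  ext i j
  fin_cases i <;> fin_cases j <;> simp [phi2, Matrix.one_apply, Matrix.vecHead, Matrix.vecTail]

lemma hasDerivAt_phi2_exp (A : Matrix (Fin 2) (Fin 2) ℂ) (t : ℝ) :
    HasDerivAt (fun s : ℝ => phi2 (exp (s • A)))
      (HU A * phi2 (exp (t • A))) t := by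
  have hE : HasDerivAt (fun u : ℝ => exp (u • A)) (A * exp (t • A)) t :=
    hasDerivAt_exp_smul_const' A t
  have he : ∀ i j, HasDerivAt (fun s : ℝ => exp (s • A) i j)
      ((A * exp (t • A)) i j) t := fun i j => hasDerivAt_matrix.1 hE i j
  set S := exp (t • A) with hS
  set T := A * S with hT
  rw [key]
  apply hasDerivAt_matrix.2
  intro i j
  fin_cases i <;> fin_cases j
  · show HasDerivAt (fun s : ℝ => exp (s • A) 0 0 ^ 2) (2 * S 0 0 * T 0 0) t
    simp only [pow_two]
    exact ((he 0 0).mul (he 0 0)).congr_deriv (by ring)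
  · show HasDerivAt (fun s : ℝ => exp (s • A) 0 1 ^ 2) (2 * S 0 1 * T 0 1) t
    simp only [pow_two]
    exact ((he 0 1).mul (he 0 1)).congr_deriv (by ring)
  · show HasDerivAt (fun s : ℝ => rt2 * exp (s • A) 0 0 * exp (s • A) 0 1)
      (rt2 * (T 0 0 * S 0 1 + S 0 0 * T 0 1)) t
    exact (((he 0 0).const_mul rt2).mul (he 0 1)).congr_deriv (by ring)
  · show HasDerivAt (fun s : ℝ => exp (s • A) 1 0 ^ 2) (2 * S 1 0 * T 1 0) t
    simp only [pow_two]
    exact ((he 1 0).mul (he 1 0)).congr_deriv (by ring)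
  · show HasDerivAt (fun s : ℝ => exp (s • A) 1 1 ^ 2) (2 * S 1 1 * T 1 1) t
    simp only [pow_two]
    exact ((he 1 1).mul (he 1 1)).congr_deriv (by ring)
  · show HasDerivAt (fun s : ℝ => rt2 * exp (s • A) 1 0 * exp (s • A) 1 1)
      (rt2 * (T 1 0 * S 1 1 + S 1 0 * T 1 1)) t
    exact (((he 1 0).const_mul rt2).mul (he 1 1)).congr_deriv (by ring)
  · show HasDerivAt (fun s : ℝ => rt2 * exp (s • A) 0 0 * exp (s • A) 1 0)
      (rt2 * (T 0 0 * S 1 0 + S 0 0 * T 1 0)) t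
    exact (((he 0 0).const_mul rt2).mul (he 1 0)).congr_deriv (by ring)
  · show HasDerivAt (fun s : ℝ => rt2 * exp (s • A) 0 1 * exp (s • A) 1 1)
      (rt2 * (T 0 1 * S 1 1 + S 0 1 * T 1 1)) t
    exact (((he 0 1).const_mul rt2).mul (he 1 1)).congr_deriv (by ring)
  · show HasDerivAt (fun s : ℝ => exp (s • A) 0 0 * exp (s • A) 1 1 +
        exp (s • A) 0 1 * exp (s • A) 1 0)
      (T 0 0 * S 1 1 + S 0 0 * T 1 1 + T 0 1 * S 1 0 + S 0 1 * T 1 0) t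
    exact (((he 0 0).mul (he 1 1)).add ((he 0 1).mul (he 1 0))).congr_deriv (by ring)

lemma exp_HU_eq (A : Matrix (Fin 2) (Fin 2) ℂ) : exp (HU A) = phi2 (exp A) := by
  set B := HU A with hB
  set G : ℝ → Matrix (Fin 3) (Fin 3) ℂ := fun t => phi2 (exp (t • A)) with hGdef
  have hKd : ∀ t : ℝ, HasDerivAt (fun u : ℝ => exp (u • (-B)) * G u) 0 t := by
    intro t
    have h1 : HasDerivAt (fun u : ℝ => exp (u • (-B))) (exp (t • (-B)) * (-B)) t :=
      hasDerivAt_exp_smul_const (-B) t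
    have h2 : HasDerivAt G (B * G t) t := hasDerivAt_phi2_exp A t
    have hz : exp (t • (-B)) * (-B) * G t + exp (t • (-B)) * (B * G t) = 0 := by
      rw [mul_assoc, neg_mul, mul_neg, neg_add_cancel]
    exact hz ▸ h1.mul h2
  have hconst : (fun u : ℝ => exp (u • (-B)) * G u) 1
      = (fun u : ℝ => exp (u • (-B)) * G u) 0 :=
    is_const_of_deriv_eq_zero (fun t => (hKd t).differentiableAt)
      (fun t => (hKd t).deriv) 1 0
  simp only [one_smul, zero_smul, exp_zero, one_mul] at hconst
  rw [hGdef] at hconst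
  simp only [one_smul, zero_smul, exp_zero, phi2_one, mul_one] at hconst
  calc exp B = exp B * (exp (-B) * phi2 (exp A)) := by rw [hconst, mul_one]
    _ = (exp B * exp (-B)) * phi2 (exp A) := by rw [mul_assoc]
    _ = phi2 (exp A) := by
        rw [← Matrix.exp_add_of_commute B (-B) (Commute.refl B).neg_right, add_neg_cancel, exp_zero, one_mul]

/-- Exponentiating the two-photon Hamiltonian recovers the two-photon unitary:
`exp(i H_U) = φ₂(exp(i H))` for every Hermitian `H`. -/
theorem exp_HU_eq_phi2_exp (H : Matrix (Fin 2) (Fin 2) ℂ) (hH : H.IsHermitian) :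
    NormedSpace.exp (Complex.I • HU H) = phi2 (NormedSpace.exp (Complex.I • H)) := by
  have h1 : Complex.I • HU H = HU (Complex.I • H) := by
    ext i j
    fin_cases i <;> fin_cases j <;> simp [HU, Matrix.smul_apply] <;> ring
  rw [h1]
  exact exp_HU_eq (Complex.I • H)
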